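/- Let X and Y be Banach spaces, and let N ⊆ B_{X*} and M ⊆ B_{Y*} be boundaries of X and Y respectively. Then the set { f ⊗ g : f ∈ N, g ∈ M } is a boundary of the injective tensor product X ⊗_ε Y: for every u ∈ X ⊗_ε Y with ||u|| = 1 there exist f ∈ N, g ∈ M with (f ⊗ g)(u) = 1. -/

import Mathlib

open NormedSpace

/-- The rank-one operator `X* → Y`, `f ↦ f x • y`, representing the elementary tensor
`x ⊗ y`.  The closed linear span of such operators in `B(X*, Y)` is an isometric copy
of the injective tensor product `X ⊗_ε Y` (the operator norm being the injective tensor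
norm). -/
noncomputable def elemTensor {X Y : Type*} [NormedAddCommGroup X] [NormedSpace ℝ X]
    [NormedAddCommGroup Y] [NormedSpace ℝ Y] (x : X) (y : Y) : (X →L[ℝ] ℝ) →L[ℝ] Y :=
  (NormedSpace.inclusionInDoubleDual ℝ X x).smulRight y

section Aux

variable {X Y : Type*} [NormedAddCommGroup X] [NormedSpace ℝ X]
    [NormedAddCommGroup Y] [NormedSpace ℝ Y]

theorem aux_closed_range [CompleteSpace X] :
    IsClosed (Set.range (inclusionInDoubleDualLi ℝ (E := X))) :=
  ((inclusionInDoubleDualLi ℝ (E := X)).isometry.isUniformInducing.isComplete_range).isClosed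

theorem aux_rep [CompleteSpace X] (u : (X →L[ℝ] ℝ) →L[ℝ] Y)
    (hu : u ∈ closure (↑(Submodule.span ℝ
      {T : (X →L[ℝ] ℝ) →L[ℝ] Y | ∃ x y, T = elemTensor x y}) :
        Set ((X →L[ℝ] ℝ) →L[ℝ] Y)))
    (g : Y →L[ℝ] ℝ) :
    ∃ x : X, (inclusionInDoubleDualLi ℝ (E := X)) x = g.comp u := by
  set S : Set ((X →L[ℝ] ℝ) →L[ℝ] Y) :=
    {v | ∃ x : X, (inclusionInDoubleDualLi ℝ (E := X)) x = g.comp v} with hS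
  have hclosed : IsClosed S := by
    have h2 : Continuous fun v : (X →L[ℝ] ℝ) →L[ℝ] Y => g.comp v :=
      (ContinuousLinearMap.compL ℝ (X →L[ℝ] ℝ) Y ℝ g).continuous
    have : S = (fun v : (X →L[ℝ] ℝ) →L[ℝ] Y => g.comp v) ⁻¹'
        (Set.range (inclusionInDoubleDualLi ℝ (E := X))) := by
      ext v; simp [hS, Set.mem_preimage, Set.mem_range, eq_comm]
    rw [this]
    exact aux_closed_range.preimage h2
  refine closure_minimal ?_ hclosed hu
  intro v hv
  induction hv using Submodule.span_induction with
  | mem T hT =>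
      obtain ⟨x, y, rfl⟩ := hT
      refine ⟨g y • x, ?_⟩
      ext f
      simp [elemTensor, inclusionInDoubleDualLi, mul_comm]
  | zero => exact ⟨0, by ext f; simp [inclusionInDoubleDualLi]⟩
  | add v w _ _ hv hw =>
      obtain ⟨x, hx⟩ := hv; obtain ⟨x', hx'⟩ := hw
      exact ⟨x + x', by ext f; rw [map_add]; simp [← hx, ← hx']⟩
  | smul c v _ hv =>
      obtain ⟨x, hx⟩ := hv
      exact ⟨c • x, by ext f; rw [map_smul]; simp [← hx]⟩

theorem aux_cont_span (w : (X →L[ℝ] ℝ) →L[ℝ] Y)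
    (hw : w ∈ Submodule.span ℝ {T : (X →L[ℝ] ℝ) →L[ℝ] Y | ∃ x y, T = elemTensor x y}) :
    Continuous fun f : WeakDual ℝ X => w (WeakDual.toStrongDual f) := by
  induction hw using Submodule.span_induction with
  | mem T hT =>
      obtain ⟨x, y, rfl⟩ := hT
      have : Continuous fun f : WeakDual ℝ X => (f x) • y :=
        (WeakDual.eval_continuous x).smul continuous_const
      simpa [elemTensor] using this
  | zero => simpa using (continuous_const : Continuous fun _ : WeakDual ℝ X => (0 : Y))
  | add a b _ _ ha hb => exact (ha.add hb : _)
  | smul c a _ ha => exact ha.const_smul c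

theorem aux_contOn (u : (X →L[ℝ] ℝ) →L[ℝ] Y)
    (hu : u ∈ closure (↑(Submodule.span ℝ
      {T : (X →L[ℝ] ℝ) →L[ℝ] Y | ∃ x y, T = elemTensor x y}) :
        Set ((X →L[ℝ] ℝ) →L[ℝ] Y)))
    : ContinuousOn (fun f : WeakDual ℝ X => u (WeakDual.toStrongDual f))
        (WeakDual.toStrongDual ⁻¹' Metric.closedBall 0 1) := by
  have hv : ∀ n : ℕ, ∃ v ∈ (Submodule.span ℝ
      {T : (X →L[ℝ] ℝ) →L[ℝ] Y | ∃ x y, T = elemTensor x y} : Submodule ℝ _),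
      dist u v < 1 / (n + 1) := fun n =>
    Metric.mem_closure_iff.1 hu _ (by positivity)
  choose v hvmem hvdist using hv
  have hunif : TendstoUniformlyOn (fun n (f : WeakDual ℝ X) => (v n) (WeakDual.toStrongDual f))
      (fun f : WeakDual ℝ X => u (WeakDual.toStrongDual f)) Filter.atTop
      (WeakDual.toStrongDual ⁻¹' Metric.closedBall 0 1) := by
    rw [Metric.tendstoUniformlyOn_iff]
    intro ε hε
    obtain ⟨n₀, hn₀⟩ := exists_nat_one_div_lt hε
    refine Filter.eventually_atTop.2 ⟨n₀, fun n hn f hf => ?_⟩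
    have hfle : ‖WeakDual.toStrongDual f‖ ≤ 1 := by
      simpa [Metric.mem_closedBall] using hf
    have hub : ‖u - v n‖ < ε := by
      have h1 : ‖u - v n‖ = dist u (v n) := (dist_eq_norm u (v n)).symm
      have h2 : (1 : ℝ) / (n + 1) ≤ 1 / (n₀ + 1) := by
        apply div_le_div_of_nonneg_left one_pos.le (by positivity)
        exact_mod_cast add_le_add_left (Nat.cast_le.2 hn) 1
      rw [h1]
      exact lt_of_lt_of_le (hvdist n) (le_of_lt (lt_of_le_of_lt h2 hn₀))
    calc dist (u (WeakDual.toStrongDual f)) ((v n) (WeakDual.toStrongDual f))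
        = ‖(u - v n) (WeakDual.toStrongDual f)‖ := by
          rw [dist_eq_norm]; simp
      _ ≤ ‖u - v n‖ * ‖WeakDual.toStrongDual f‖ := (u - v n).le_opNorm _
      _ ≤ ‖u - v n‖ * 1 := mul_le_mul_of_nonneg_left hfle (norm_nonneg (u - v n))
      _ < ε := by simpa using hub
  exact hunif.continuousOn (Filter.Eventually.of_forall fun n =>
    (aux_cont_span (v n) (hvmem n)).continuousOn).frequently

end Aux

/-- If `N ⊆ B_{X*}` and `M ⊆ B_{Y*}` are boundaries of the Banach spaces `X` and `Y`,
then `{f ⊗ g : f ∈ N, g ∈ M}` is a boundary of the injective tensor product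
`X ⊗_ε Y`: every `u` of norm one in `X ⊗_ε Y` admits `f ∈ N`, `g ∈ M` with
`(f ⊗ g)(u) = g (u f) = 1`. -/
theorem boundary_injectiveTensorProduct {X Y : Type*}
    [NormedAddCommGroup X] [NormedSpace ℝ X] [CompleteSpace X]
    [NormedAddCommGroup Y] [NormedSpace ℝ Y] [CompleteSpace Y]
    (N : Set (X →L[ℝ] ℝ)) (M : Set (Y →L[ℝ] ℝ))
    (hN1 : ∀ f ∈ N, ‖f‖ ≤ 1) (hM1 : ∀ g ∈ M, ‖g‖ ≤ 1)
    (hN : ∀ x : X, ‖x‖ = 1 → ∃ f ∈ N, f x = 1)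
    (hM : ∀ y : Y, ‖y‖ = 1 → ∃ g ∈ M, g y = 1)
    (u : (X →L[ℝ] ℝ) →L[ℝ] Y)
    (hu : u ∈ closure (↑(Submodule.span ℝ
      {T : (X →L[ℝ] ℝ) →L[ℝ] Y | ∃ x y, T = elemTensor x y}) :
        Set ((X →L[ℝ] ℝ) →L[ℝ] Y)))
    (hu1 : ‖u‖ = 1) :
    ∃ f ∈ N, ∃ g ∈ M, g (u f) = 1 := by
  have hι : ∀ (z : X) (φ : X →L[ℝ] ℝ),
      (inclusionInDoubleDualLi ℝ (E := X)) z φ = φ z := fun z φ => rfl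
  -- Banach–Alaoglu: the closed unit ball of `X*` is weak-* compact
  have hcomp : IsCompact (WeakDual.toStrongDual ⁻¹' Metric.closedBall (0 : StrongDual ℝ X) 1) :=
    WeakDual.isCompact_closedBall (0 : StrongDual ℝ X) 1
  have hne : (WeakDual.toStrongDual ⁻¹' Metric.closedBall (0 : StrongDual ℝ X) 1).Nonempty :=
    ⟨0, by simp [Metric.mem_closedBall]⟩
  have hcont := (aux_contOn u hu).norm
  obtain ⟨f₀, hf₀B, hmax⟩ := hcomp.exists_isMaxOn hne hcont
  set F₀ : X →L[ℝ] ℝ := WeakDual.toStrongDual f₀ with hF₀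
  have hf₀le : ‖F₀‖ ≤ 1 := by
    simpa [Metric.mem_closedBall, hF₀] using hf₀B
  have h1 : ‖u F₀‖ = 1 := by
    refine le_antisymm ?_ ?_
    · calc ‖u F₀‖ ≤ ‖u‖ * ‖F₀‖ := u.le_opNorm _
        _ ≤ 1 * 1 := by rw [hu1]; exact mul_le_mul_of_nonneg_left hf₀le (by norm_num)
        _ = 1 := one_mul 1
    · by_contra h
      push_neg at h
      obtain ⟨f, hf1, hflt⟩ := u.exists_lt_apply_of_lt_opNorm (by rw [hu1]; exact h)
      have hfB : StrongDual.toWeakDual f ∈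
          WeakDual.toStrongDual ⁻¹' Metric.closedBall (0 : StrongDual ℝ X) 1 := by
        simp [Metric.mem_closedBall, hf1.le]
      have := hmax hfB
      simp only [Set.mem_setOf_eq] at this
      exact absurd (lt_of_lt_of_le hflt (by simpa using this)) (lt_irrefl _)
  obtain ⟨g, hgM, hg⟩ := hM (u F₀) h1
  obtain ⟨x, hx⟩ := aux_rep u hu g
  have hxnorm : ‖x‖ = 1 := by
    refine le_antisymm ?_ ?_
    · have hn' : ‖(inclusionInDoubleDualLi ℝ (E := X)) x‖ = ‖x‖ :=
        (inclusionInDoubleDualLi ℝ (E := X)).norm_map x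
      rw [← hn', hx]
      calc ‖g.comp u‖ ≤ ‖g‖ * ‖u‖ := g.opNorm_comp_le u
        _ ≤ 1 * 1 := mul_le_mul (hM1 g hgM) (le_of_eq hu1) (norm_nonneg u) zero_le_one
        _ = 1 := one_mul 1
    · have h2 : F₀ x = 1 := by
        have h3 := congrArg (fun T : StrongDual ℝ (StrongDual ℝ X) => T F₀) hx
        simp only [hι] at h3
        rw [h3]
        exact hg
      calc (1 : ℝ) = ‖F₀ x‖ := by rw [h2]; simp
        _ ≤ ‖F₀‖ * ‖x‖ := F₀.le_opNorm x
        _ ≤ 1 * ‖x‖ := mul_le_mul_of_nonneg_right hf₀le (norm_nonneg x)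
        _ = ‖x‖ := one_mul _
  obtain ⟨f, hfN, hf⟩ := hN x hxnorm
  refine ⟨f, hfN, g, hgM, ?_⟩
  have h4 := congrArg (fun T : StrongDual ℝ (StrongDual ℝ X) => T f) hx
  simp only [hι] at h4
  rw [show g (u f) = g.comp u f from rfl, ← h4, hf]
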